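/- For n ≥ 0: (i) Σ_{v ∈ Cay[n]} 2^{des(v)} equals the number of pairs (u,v) ∈ WI[n] × Cay[n] with Des(u) ⊆ Des(v), which equals the number of Burge matrices of size n; (ii) Σ_{v ∈ Cay[n]} 2^{des∘(v)} equals the number of pairs (u,v) ∈ WI[n] × Cay[n] with Des(u) ⊆ Des∘(v), which equals the number of binary Burge matrices of size n; (iii) Σ_{v ∈ S_n} 2^{des(v)} equals the number of pairs (u,v) with u ∈ WI[n], v a permutation of {1,…,n}, and Des(u) ⊆ Des(v), which equals the number of Burge matrices of size n whose every column sums to 1. -/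

import Mathlib

namespace CayPaper

/-- A word of length `n` (1-indexed): it vanishes outside `{1,…,n}`. -/
def IsWord (n : ℕ) (v : ℕ → ℕ) : Prop := ∀ i, i ∉ Set.Icc 1 n → v i = 0

/-- A Cayley permutation of length `n`: a word on `{1,…,n}` whose image is `{1,…,k}`
for some `k ≤ n`. -/
def IsCayley (n : ℕ) (v : ℕ → ℕ) : Prop :=
  IsWord n v ∧ ∃ k, v '' Set.Icc 1 n = Set.Icc 1 k

/-- A weakly increasing Cayley permutation of length `n`. -/
def IsWI (n : ℕ) (v : ℕ → ℕ) : Prop :=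
  IsCayley n v ∧ MonotoneOn v (Set.Icc 1 n)

/-- A permutation of `{1,…,n}`, encoded as a word. -/
def IsPermWord (n : ℕ) (v : ℕ → ℕ) : Prop :=
  IsWord n v ∧ Set.BijOn v (Set.Icc 1 n) (Set.Icc 1 n)

/-- The weak descent set `Des(v) = { i ∈ {1,…,n−1} : v(i) ≥ v(i+1) }`. -/
def desSet (n : ℕ) (v : ℕ → ℕ) : Finset ℕ :=
  (Finset.Icc 1 (n - 1)).filter fun i => v (i + 1) ≤ v i

/-- The strict descent set `Des∘(v) = { i : v(i) > v(i+1) }`. -/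
def sdesSet (n : ℕ) (v : ℕ → ℕ) : Finset ℕ :=
  (Finset.Icc 1 (n - 1)).filter fun i => v (i + 1) < v i

/-- The weak ascent set `Asc(v) = { i : v(i) ≤ v(i+1) }`. -/
def ascSet (n : ℕ) (v : ℕ → ℕ) : Finset ℕ :=
  (Finset.Icc 1 (n - 1)).filter fun i => v i ≤ v (i + 1)

/-- The strict ascent set `Asc∘(v) = { i : v(i) < v(i+1) }`. -/
def sascSet (n : ℕ) (v : ℕ → ℕ) : Finset ℕ :=
  (Finset.Icc 1 (n - 1)).filter fun i => v i < v (i + 1)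

def des (n : ℕ) (v : ℕ → ℕ) : ℕ := (desSet n v).card
def sdes (n : ℕ) (v : ℕ → ℕ) : ℕ := (sdesSet n v).card
def asc (n : ℕ) (v : ℕ → ℕ) : ℕ := (ascSet n v).card
def sasc (n : ℕ) (v : ℕ → ℕ) : ℕ := (sascSet n v).card

/-- The maximum value of a word. -/
def wmax (n : ℕ) (v : ℕ → ℕ) : ℕ := (Finset.Icc 1 n).sup v

/-- Reverse: `v^r(i) = v(n+1−i)`. -/
def wrev (n : ℕ) (v : ℕ → ℕ) : ℕ → ℕ := fun i =>
  if 1 ≤ i ∧ i ≤ n then v (n + 1 - i) else 0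

/-- Complement: `v^c(i) = max(v)+1−v(i)`. -/
def wcomp (n : ℕ) (v : ℕ → ℕ) : ℕ → ℕ := fun i =>
  if 1 ≤ i ∧ i ≤ n then wmax n v + 1 - v i else 0

/-- The word `(σ(1), …, σ(n))` (1-indexed) of a permutation `σ` of `Fin n`. -/
def permWord (n : ℕ) (σ : Equiv.Perm (Fin n)) : ℕ → ℕ := fun i =>
  if h : 1 ≤ i ∧ i ≤ n then ((σ ⟨i - 1, by omega⟩ : Fin n) : ℕ) + 1 else 0

/-- The conjugate of `u`: the unique weakly increasing Cayley permutation of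
length `n` whose descent set is `{1,…,n−1} \ Des(u)`. -/
noncomputable def conjWI (n : ℕ) (u : ℕ → ℕ) : ℕ → ℕ :=
  haveI := Classical.dec (∃ w, IsWI n w ∧ desSet n w = Finset.Icc 1 (n - 1) \ desSet n u)
  if h : ∃ w, IsWI n w ∧ desSet n w = Finset.Icc 1 (n - 1) \ desSet n u
    then h.choose else fun _ => 0

/-- A Burge matrix: every row and every column contains a nonzero entry. -/
def IsBurge {p q : ℕ} (M : Matrix (Fin p) (Fin q) ℕ) : Prop :=
  (∀ i, ∃ j, M i j ≠ 0) ∧ (∀ j, ∃ i, M i j ≠ 0)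

/-- The size of a matrix with natural entries: the sum of its entries. -/
def matSize {p q : ℕ} (M : Matrix (Fin p) (Fin q) ℕ) : ℕ := ∑ i, ∑ j, M i j

/-- Burge matrices of size `n` (of all dimensions). -/
def BurgeMatrices (n : ℕ) : Set (Σ p : ℕ, Σ q : ℕ, Matrix (Fin p) (Fin q) ℕ) :=
  {M | IsBurge M.2.2 ∧ matSize M.2.2 = n}

/-- Binary Burge matrices of size `n`. -/
def BinaryBurgeMatrices (n : ℕ) : Set (Σ p : ℕ, Σ q : ℕ, Matrix (Fin p) (Fin q) ℕ) :=
  {M | M ∈ BurgeMatrices n ∧ ∀ i j, M.2.2 i j ≤ 1}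

/-- Burge matrices of size `n` whose every column sums to `1`. -/
def ColSumOneBurgeMatrices (n : ℕ) : Set (Σ p : ℕ, Σ q : ℕ, Matrix (Fin p) (Fin q) ℕ) :=
  {M | M ∈ BurgeMatrices n ∧ ∀ j, ∑ i, M.2.2 i j = 1}

/-- Burge words: pairs `(u,v) ∈ WI[n] × Cay[n]` with `Des(u) ⊆ Des(v)`. -/
def BurPairs (n : ℕ) : Set ((ℕ → ℕ) × (ℕ → ℕ)) :=
  {p | IsWI n p.1 ∧ IsCayley n p.2 ∧ desSet n p.1 ⊆ desSet n p.2}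

/-- Pairs `(u,v) ∈ WI[n] × Cay[n]` with `Des(u) ⊆ Des∘(v)`. -/
def BBurPairs (n : ℕ) : Set ((ℕ → ℕ) × (ℕ → ℕ)) :=
  {p | IsWI n p.1 ∧ IsCayley n p.2 ∧ desSet n p.1 ⊆ sdesSet n p.2}

/-- Pairs `(u,v) ∈ WI[n] × S_n` with `Des(u) ⊆ Des(v)`. -/
def PBurPairs (n : ℕ) : Set ((ℕ → ℕ) × (ℕ → ℕ)) :=
  {p | IsWI n p.1 ∧ IsPermWord n p.2 ∧ desSet n p.1 ⊆ desSet n p.2}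

/-- `Ω[n]`: pairs `(u,v) ∈ WI[n] × Cay[n]` with `Des(u) ⊇ Des(v)`. -/
def OmegaPairs (n : ℕ) : Set ((ℕ → ℕ) × (ℕ → ℕ)) :=
  {p | IsWI n p.1 ∧ IsCayley n p.2 ∧ desSet n p.2 ⊆ desSet n p.1}

/-- `v` lists the positions `1,…,n` in the order obtained by sorting the columns
`(x_i, i)` so that first components are weakly increasing, ties broken by strictly
decreasing second components.  For a permutation word `v` this says exactly that
`v = Γ(id, x)`, the bottom row of the Burge transpose of `(id, x)`. -/
def sortsColumns (n : ℕ) (x v : ℕ → ℕ) : Prop :=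
  ∀ i ∈ Finset.Icc 1 (n - 1),
    x (v i) < x (v (i + 1)) ∨ (x (v i) = x (v (i + 1)) ∧ v (i + 1) < v i)

/-- The Fishburn basis of a permutation word `v`:
`basis(v) = { x ∈ Cay[n] : Γ(id, x) = v }`. -/
def fishburnBasis (n : ℕ) (v : ℕ → ℕ) : Set (ℕ → ℕ) :=
  {x | IsCayley n x ∧ sortsColumns n x v}

/-- Stanley's `v`-compatibility condition:
`x(v(1)) ≤ ⋯ ≤ x(v(n))` with strict inequality at every ascent of `v`. -/
def VCompatible (n : ℕ) (v x : ℕ → ℕ) : Prop :=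
  (∀ i ∈ Finset.Icc 1 (n - 1), x (v i) ≤ x (v (i + 1))) ∧
    ∀ i ∈ Finset.Icc 1 (n - 1), v i < v (i + 1) → x (v i) < x (v (i + 1))

/-- A map `{1,…,n} → {1,…,m}`, encoded as a word. -/
def IsMapTo (n m : ℕ) (x : ℕ → ℕ) : Prop :=
  IsWord n x ∧ ∀ i ∈ Set.Icc 1 n, x i ∈ Set.Icc 1 m

/-- Weakly increasing maps `{1,…,n} → {1,…,m}`. -/
def WIgen (n m : ℕ) : Set (ℕ → ℕ) :=
  {u | IsMapTo n m u ∧ MonotoneOn u (Set.Icc 1 n)}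





variable {n : ℕ}

/-- the weakly increasing Cayley permutation with plateau set `S`. -/
def wiOf (n : ℕ) (S : Finset ℕ) : ℕ → ℕ := fun i =>
  if 1 ≤ i ∧ i ≤ n then i - (S ∩ Finset.Icc 1 (i - 1)).card else 0

lemma inter_card_le (S : Finset ℕ) (i : ℕ) :
    (S ∩ Finset.Icc 1 (i - 1)).card ≤ i - 1 := by
  calc (S ∩ Finset.Icc 1 (i - 1)).card ≤ (Finset.Icc 1 (i - 1)).card :=
        Finset.card_le_card (Finset.inter_subset_right)
    _ = i - 1 := by rw [Nat.card_Icc]; omega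

lemma inter_card_step (S : Finset ℕ) (i : ℕ) (hi : 1 ≤ i) :
    (S ∩ Finset.Icc 1 i).card
      = (S ∩ Finset.Icc 1 (i - 1)).card + (if i ∈ S then 1 else 0) := by
  by_cases h : i ∈ S
  · have h2 : S ∩ Finset.Icc 1 i = insert i (S ∩ Finset.Icc 1 (i - 1)) := by
      ext j
      simp only [Finset.mem_inter, Finset.mem_insert, Finset.mem_Icc]
      constructor
      · rintro ⟨hjS, hj1, hj2⟩
        rcases eq_or_ne j i with rfl | hne
        · exact Or.inl rfl
        · exact Or.inr ⟨hjS, hj1, by omega⟩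
      · rintro (rfl | ⟨hjS, hj1, hj2⟩)
        · exact ⟨h, hi, le_rfl⟩
        · exact ⟨hjS, hj1, by omega⟩
    rw [h2, Finset.card_insert_of_notMem, if_pos h]
    simp only [Finset.mem_inter, Finset.mem_Icc, not_and]
    intro _ _; omega
  · have h2 : S ∩ Finset.Icc 1 i = S ∩ Finset.Icc 1 (i - 1) := by
      ext j
      simp only [Finset.mem_inter, Finset.mem_Icc]
      constructor
      · rintro ⟨hjS, hj1, hj2⟩
        refine ⟨hjS, hj1, ?_⟩
        rcases eq_or_ne j i with rfl | hne
        · exact absurd hjS h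
        · omega
      · rintro ⟨hjS, hj1, hj2⟩
        exact ⟨hjS, hj1, by omega⟩
    rw [h2, if_neg h]
    omega

lemma wiOf_in (S : Finset ℕ) {i : ℕ} (h1 : 1 ≤ i) (h2 : i ≤ n) :
    wiOf n S i = i - (S ∩ Finset.Icc 1 (i - 1)).card := by
  simp [wiOf, h1, h2]

lemma wiOf_one (S : Finset ℕ) (hn : 1 ≤ n) : wiOf n S 1 = 1 := by
  rw [wiOf_in S le_rfl hn]
  simp

lemma wiOf_ge_one (S : Finset ℕ) {i : ℕ} (h1 : 1 ≤ i) (h2 : i ≤ n) :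
    1 ≤ wiOf n S i := by
  rw [wiOf_in S h1 h2]
  have := inter_card_le S i
  omega

lemma wiOf_step (S : Finset ℕ) {i : ℕ} (h1 : 1 ≤ i) (h2 : i + 1 ≤ n) :
    wiOf n S (i + 1) = wiOf n S i + (if i ∈ S then 0 else 1) := by
  rw [wiOf_in S h1 (by omega), wiOf_in S (by omega) h2]
  have hc : (i + 1) - 1 = i := by omega
  rw [hc, inter_card_step S i h1]
  have := inter_card_le S i
  split <;> omega

lemma wiOf_mono (S : Finset ℕ) : MonotoneOn (wiOf n S) (Set.Icc 1 n) := by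
  rintro i ⟨hi1, hi2⟩ j ⟨hj1, hj2⟩ hij
  clear hj1
  induction j, hij using Nat.le_induction with
  | base => exact le_rfl
  | succ j hij ih =>
    have h1 : wiOf n S j ≤ wiOf n S (j + 1) := by
      rw [wiOf_step S (by omega) (by omega)]
      split <;> omega
    exact le_trans (ih (by omega)) h1

/-- Image of a "stepwise" function on `[1,n]` is an interval. -/
lemma image_interval (hn : 1 ≤ n) (f : ℕ → ℕ) (h1 : f 1 = 1)
    (hmono : MonotoneOn f (Set.Icc 1 n))
    (hstep : ∀ i, 1 ≤ i → i + 1 ≤ n → f (i + 1) ≤ f i + 1) :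
    f '' Set.Icc 1 n = Set.Icc 1 (f n) := by
  apply Set.eq_of_subset_of_subset
  · rintro m ⟨i, ⟨hi1, hi2⟩, rfl⟩
    constructor
    · calc 1 = f 1 := h1.symm
        _ ≤ f i := hmono ⟨le_rfl, hn⟩ ⟨hi1, hi2⟩ hi1
    · exact hmono ⟨hi1, hi2⟩ ⟨hn, le_rfl⟩ hi2
  · rintro m ⟨hm1, hm2⟩
    have hex : ∃ j, m ≤ f (j + 1) := ⟨n - 1, by
      have : n - 1 + 1 = n := by omega
      rw [this]; exact hm2⟩
    classical
    let j₀ := Nat.find hex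
    have hspec : m ≤ f (j₀ + 1) := Nat.find_spec hex
    have hj₀n : j₀ ≤ n - 1 := Nat.find_le (by
      have : n - 1 + 1 = n := by omega
      rw [this]; exact hm2)
    by_cases hj0 : j₀ = 0
    · refine ⟨1, ⟨le_rfl, hn⟩, ?_⟩
      rw [hj0] at hspec
      simp only [zero_add] at hspec
      omega
    · have hlt : ¬ m ≤ f ((j₀ - 1) + 1) := Nat.find_min hex (by omega)
      have hj1 : j₀ - 1 + 1 = j₀ := by omega
      rw [hj1] at hlt
      have hstep' : f (j₀ + 1) ≤ f j₀ + 1 := hstep j₀ (by omega) (by omega)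
      refine ⟨j₀ + 1, ⟨by omega, by omega⟩, ?_⟩
      omega

lemma wiOf_isWI (S : Finset ℕ) (hS : S ⊆ Finset.Icc 1 (n - 1)) :
    IsWI n (wiOf n S) := by
  have hword : IsWord n (wiOf n S) := by
    intro i hi
    simp only [Set.mem_Icc, not_and_or, not_le] at hi
    simp only [wiOf, ite_eq_right_iff]
    intro ⟨a, b⟩; omega
  rcases Nat.eq_zero_or_pos n with rfl | hn
  · refine ⟨⟨hword, 0, ?_⟩, ?_⟩
    · have he : Set.Icc (1:ℕ) 0 = ∅ := Set.Icc_eq_empty (by omega)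
      rw [he]; simp
    · rintro i hi
      exfalso
      simp only [Set.mem_Icc] at hi
      omega
  · refine ⟨⟨hword, wiOf n S n, ?_⟩, wiOf_mono S⟩
    exact image_interval hn _ (wiOf_one S hn) (wiOf_mono S)
      (fun i hi1 hi2 => by rw [wiOf_step S hi1 hi2]; split <;> omega)

lemma wiOf_desSet (S : Finset ℕ) (hS : S ⊆ Finset.Icc 1 (n - 1)) :
    desSet n (wiOf n S) = S := by
  ext i
  simp only [desSet, Finset.mem_filter, Finset.mem_Icc]
  constructor
  · rintro ⟨⟨hi1, hi2⟩, hd⟩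
    rw [wiOf_step S hi1 (by omega)] at hd
    by_contra hc
    rw [if_neg hc] at hd
    omega
  · intro hi
    have hmem := hS hi
    simp only [Finset.mem_Icc] at hmem
    refine ⟨hmem, ?_⟩
    rw [wiOf_step S hmem.1 (by omega), if_pos hi]
    omega

lemma isWI_val_one (u : ℕ → ℕ) (hu : IsWI n u) (hn : 1 ≤ n) : u 1 = 1 := by
  obtain ⟨⟨hword, k, himg⟩, hmono⟩ := hu
  have h1 : u 1 ∈ Set.Icc 1 k := by
    rw [← himg]; exact ⟨1, ⟨le_rfl, hn⟩, rfl⟩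
  have ha : 1 ≤ u 1 := h1.1
  have hb : u 1 ≤ k := h1.2
  have hk : (1 : ℕ) ∈ Set.Icc 1 k := ⟨le_rfl, le_trans ha hb⟩
  rw [← himg] at hk
  obtain ⟨j, hj, hj1⟩ := hk
  have hc := hmono ⟨le_rfl, hn⟩ hj hj.1
  omega

lemma isWI_step (u : ℕ → ℕ) (hu : IsWI n u) {i : ℕ} (h1 : 1 ≤ i) (h2 : i + 1 ≤ n) :
    u (i + 1) = u i + (if i ∈ desSet n u then 0 else 1) := by
  obtain ⟨⟨hword, k, himg⟩, hmono⟩ := hu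
  have hmle : u i ≤ u (i + 1) := hmono ⟨h1, by omega⟩ ⟨by omega, h2⟩ (by omega)
  by_cases hd : i ∈ desSet n u
  · simp only [desSet, Finset.mem_filter] at hd
    rw [if_pos]
    · omega
    · simpa [desSet, Finset.mem_filter, Finset.mem_Icc] using
        And.intro (And.intro h1 (by omega : i ≤ n - 1)) hd.2
  · have hd' : ¬ u (i + 1) ≤ u i := by
      intro hc
      exact hd (by simp [desSet, Finset.mem_filter, Finset.mem_Icc]; exact ⟨⟨h1, by omega⟩, hc⟩)
    rw [if_neg hd]
    -- skip argument : u (i+1) ≤ u i + 1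
    by_contra hc
    have hgt : u i + 1 < u (i + 1) := by omega
    have hm : u i + 1 ∈ Set.Icc 1 k := by
      have h2' : u (i + 1) ∈ Set.Icc 1 k := by
        rw [← himg]; exact ⟨i + 1, ⟨by omega, h2⟩, rfl⟩
      exact ⟨by omega, by have := h2'.2; omega⟩
    rw [← himg] at hm
    obtain ⟨j, ⟨hj1, hj2⟩, hj3⟩ := hm
    rcases le_or_gt j i with h | h
    · have := hmono ⟨hj1, by omega⟩ ⟨h1, by omega⟩ h
      omega
    · have := hmono ⟨by omega, h2⟩ ⟨hj1, hj2⟩ (by omega)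
      omega

lemma isWI_eq_wiOf (u : ℕ → ℕ) (hu : IsWI n u) : u = wiOf n (desSet n u) := by
  funext i
  by_cases hi : 1 ≤ i ∧ i ≤ n
  · obtain ⟨hi1, hi2⟩ := hi
    induction i, hi1 using Nat.le_induction with
    | base => rw [isWI_val_one u hu (by omega), wiOf_one _ (by omega)]
    | succ i hi ih =>
      rw [isWI_step u hu hi (by omega), ih (by omega),
        wiOf_step (desSet n u) hi (by omega)]
  · rw [hu.1.1 i (by simpa [Set.mem_Icc] using hi)]
    simp only [wiOf, if_neg hi]

lemma desSet_subset (n : ℕ) (v : ℕ → ℕ) : desSet n v ⊆ Finset.Icc 1 (n - 1) :=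
  Finset.filter_subset _ _

lemma WI_bijOn (T : Finset ℕ) (hT : T ⊆ Finset.Icc 1 (n - 1)) :
    Set.BijOn (wiOf n) ↑T.powerset {u : ℕ → ℕ | IsWI n u ∧ desSet n u ⊆ T} := by
  refine ⟨?_, ?_, ?_⟩
  · intro S hS
    simp only [Finset.coe_powerset, Set.mem_preimage, Set.mem_powerset_iff,
      Finset.coe_subset] at hS
    have hS' : S ⊆ Finset.Icc 1 (n - 1) := hS.trans hT
    exact ⟨wiOf_isWI S hS', by rw [wiOf_desSet S hS']; exact hS⟩
  · intro S hS S' hS' h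
    simp only [Finset.coe_powerset, Set.mem_preimage, Set.mem_powerset_iff,
      Finset.coe_subset] at hS hS'
    rw [← wiOf_desSet S (hS.trans hT), ← wiOf_desSet S' (hS'.trans hT), h]
  · rintro u ⟨hu, hdes⟩
    refine ⟨desSet n u, ?_, (isWI_eq_wiOf u hu).symm⟩
    simp only [Finset.coe_powerset, Set.mem_preimage, Set.mem_powerset_iff,
      Finset.coe_subset]
    exact hdes

lemma WI_count (T : Finset ℕ) (hT : T ⊆ Finset.Icc 1 (n - 1)) :
    Set.ncard {u : ℕ → ℕ | IsWI n u ∧ desSet n u ⊆ T} = 2 ^ T.card := by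
  rw [← (WI_bijOn T hT).image_eq, Set.ncard_image_of_injOn (WI_bijOn T hT).injOn,
    Set.ncard_coe_finset, Finset.card_powerset]

lemma WI_finite : Set.Finite {u : ℕ → ℕ | IsWI n u} := by
  have h : {u : ℕ → ℕ | IsWI n u}
      = {u : ℕ → ℕ | IsWI n u ∧ desSet n u ⊆ Finset.Icc 1 (n - 1)} := by
    ext u
    exact ⟨fun h => ⟨h, desSet_subset n u⟩, fun h => h.1⟩
  rw [h, ← (WI_bijOn _ (le_refl _)).image_eq]
  exact Set.Finite.image _ (Finset.finite_toSet _)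


lemma cayley_k_le (v : ℕ → ℕ) (hw : IsWord n v) {k : ℕ}
    (himg : v '' Set.Icc 1 n = Set.Icc 1 k) : k ≤ n := by
  have h1 : (Set.Icc 1 k).ncard = k := by
    rw [← Finset.coe_Icc, Set.ncard_coe_finset, Nat.card_Icc]; omega
  have h2 : (Set.Icc 1 n).ncard = n := by
    rw [← Finset.coe_Icc, Set.ncard_coe_finset, Nat.card_Icc]; omega
  have h3 : (v '' Set.Icc 1 n).ncard ≤ (Set.Icc 1 n).ncard :=
    Set.ncard_image_le (Set.finite_Icc _ _)
  rw [himg, h1, h2] at h3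
  exact h3

lemma cayley_val (v : ℕ → ℕ) (hv : IsCayley n v) {i : ℕ} (h1 : 1 ≤ i) (h2 : i ≤ n) :
    1 ≤ v i ∧ v i ≤ n := by
  obtain ⟨hw, k, himg⟩ := hv
  have hk := cayley_k_le v hw himg
  have hm : v i ∈ Set.Icc 1 k := by
    rw [← himg]; exact ⟨i, ⟨h1, h2⟩, rfl⟩
  exact ⟨hm.1, le_trans hm.2 hk⟩

lemma cayley_finite : Set.Finite {v : ℕ → ℕ | IsCayley n v} := by
  classical
  have hinj : Set.InjOn
      (fun (v : ℕ → ℕ) => fun (i : Fin (n + 1)) => (⟨min (v i) n, by omega⟩ : Fin (n + 1)))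
      {v | IsCayley n v} := by
    intro v hv w hw h
    funext i
    by_cases hi : 1 ≤ i ∧ i ≤ n
    · have hif : i < n + 1 := by omega
      have h2 := congrFun h ⟨i, hif⟩
      simp only [Fin.mk.injEq] at h2
      have hv1 := cayley_val v hv hi.1 hi.2
      have hw1 := cayley_val w hw hi.1 hi.2
      omega
    · rw [hv.1 i (by simpa [Set.mem_Icc] using hi), hw.1 i (by simpa [Set.mem_Icc] using hi)]
  apply Set.Finite.of_finite_image ?_ hinj
  exact Set.Finite.subset Set.finite_univ (Set.subset_univ _)

lemma permword_isCayley {v : ℕ → ℕ} (h : IsPermWord n v) : IsCayley n v :=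
  ⟨h.1, n, h.2.image_eq⟩

lemma permword_finite : Set.Finite {v : ℕ → ℕ | IsPermWord n v} :=
  Set.Finite.subset cayley_finite (fun v hv => permword_isCayley hv)

/-- The fiber-counting lemma. -/
lemma FIB {n : ℕ} (V : Set (ℕ → ℕ)) (hV : V.Finite) (D : (ℕ → ℕ) → Finset ℕ)
    (hD : ∀ v ∈ V, D v ⊆ Finset.Icc 1 (n - 1)) :
    Set.ncard {p : (ℕ → ℕ) × (ℕ → ℕ) | IsWI n p.1 ∧ p.2 ∈ V ∧ desSet n p.1 ⊆ D p.2}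
      = ∑ᶠ v ∈ V, 2 ^ (D v).card := by
  classical
  set S := {p : (ℕ → ℕ) × (ℕ → ℕ) | IsWI n p.1 ∧ p.2 ∈ V ∧ desSet n p.1 ⊆ D p.2} with hSdef
  have hSfin : S.Finite := by
    apply Set.Finite.subset (Set.Finite.prod (WI_finite (n := n)) hV)
    rintro ⟨u, v⟩ ⟨h1, h2, h3⟩
    exact ⟨h1, h2⟩
  have hL : Set.ncard S = hSfin.toFinset.card := by
    rw [← Set.ncard_coe_finset, Set.Finite.coe_toFinset]
  have hR : ∑ᶠ v ∈ V, (2:ℕ) ^ (D v).card = ∑ v ∈ hV.toFinset, 2 ^ (D v).card := by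
    conv_lhs => rw [← Set.Finite.coe_toFinset hV]
    rw [finsum_mem_coe_finset]
  rw [hL, hR]
  rw [Finset.card_eq_sum_card_fiberwise (f := Prod.snd) (t := hV.toFinset) ?_]
  swap
  · intro p hp
    rw [Finset.mem_coe, Set.Finite.mem_toFinset] at hp ⊢
    exact hp.2.1
  refine Finset.sum_congr rfl ?_
  intro v hv
  rw [Set.Finite.mem_toFinset] at hv
  have hUfin : Set.Finite {u : ℕ → ℕ | IsWI n u ∧ desSet n u ⊆ D v} :=
    Set.Finite.subset WI_finite (fun u hu => hu.1)
  have himg : hSfin.toFinset.filter (fun p => p.2 = v)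
      = hUfin.toFinset.image (fun u => (u, v)) := by
    ext ⟨u, w⟩
    simp only [Finset.mem_filter, Set.Finite.mem_toFinset, Finset.mem_image, Set.mem_setOf_eq]
    constructor
    · rintro ⟨⟨h1, h2, h3⟩, rfl⟩
      exact ⟨u, ⟨h1, h3⟩, rfl⟩
    · rintro ⟨u', ⟨h1, h3⟩, heq⟩
      cases heq
      exact ⟨⟨h1, hv, h3⟩, rfl⟩
  rw [himg, Finset.card_image_of_injective _ (fun a b h => congrArg Prod.fst h)]
  rw [← Set.ncard_coe_finset, Set.Finite.coe_toFinset]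
  exact WI_count (D v) (hD v hv)


/-- The sorting order on columns. -/
def rord : ℕ × ℕ → ℕ × ℕ → Prop := fun x y => x.1 < y.1 ∨ (x.1 = y.1 ∧ y.2 ≤ x.2)

instance : DecidableRel rord := fun x y => by unfold rord; infer_instance
instance : IsTrans (ℕ × ℕ) rord := ⟨fun a b c h1 h2 => by unfold rord at *; omega⟩
instance : IsAntisymm (ℕ × ℕ) rord := ⟨fun a b h1 h2 => by
  have h3 : a.1 = b.1 ∧ a.2 = b.2 := by unfold rord at *; omega
  exact Prod.ext h3.1 h3.2⟩
instance : IsTotal (ℕ × ℕ) rord := ⟨fun a b => by unfold rord; omega⟩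

def mlt {p q : ℕ} (M : Matrix (Fin p) (Fin q) ℕ) : Multiset (ℕ × ℕ) :=
  ∑ a : Fin p, ∑ b : Fin q, Multiset.replicate (M a b) ((a : ℕ) + 1, (b : ℕ) + 1)

lemma card_mlt {p q : ℕ} (M : Matrix (Fin p) (Fin q) ℕ) :
    Multiset.card (mlt M) = matSize M := by
  simp [mlt, matSize]

lemma mem_mlt {p q : ℕ} {M : Matrix (Fin p) (Fin q) ℕ} {x : ℕ × ℕ} (h : x ∈ mlt M) :
    ∃ a b, M a b ≠ 0 ∧ x = ((a : ℕ) + 1, (b : ℕ) + 1) := by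
  simp only [mlt, Multiset.mem_sum, Finset.mem_univ, true_and] at h
  obtain ⟨a, b, hab⟩ := h
  rw [Multiset.mem_replicate] at hab
  exact ⟨a, b, hab.1, hab.2⟩

lemma count_mlt_ab {p q : ℕ} (M : Matrix (Fin p) (Fin q) ℕ) (a : Fin p) (b : Fin q) :
    (mlt M).count ((a : ℕ) + 1, (b : ℕ) + 1) = M a b := by
  classical
  have hc : ∀ x : ℕ × ℕ, (mlt M).count x
      = ∑ a' : Fin p, ∑ b' : Fin q, if ((a' : ℕ) + 1, (b' : ℕ) + 1) = x then M a' b' else 0 := by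
    intro x
    simp [mlt, Multiset.count_sum', Multiset.count_replicate]
  rw [hc]
  rw [Finset.sum_eq_single a]
  · rw [Finset.sum_eq_single b]
    · simp
    · intro b' _ hne
      rw [if_neg]
      intro hcon
      apply hne
      have h2 := congrArg Prod.snd hcon
      simp only at h2
      exact Fin.ext (by omega)
    · intro hb; exact absurd (Finset.mem_univ b) hb
  · intro a' _ hne
    apply Finset.sum_eq_zero
    intro b' _
    rw [if_neg]
    intro hcon
    apply hne
    have h2 := congrArg Prod.fst hcon
    simp only at h2
    exact Fin.ext (by omega)
  · intro ha; exact absurd (Finset.mem_univ a) ha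

lemma count_mlt_zero {p q : ℕ} (M : Matrix (Fin p) (Fin q) ℕ) {x : ℕ × ℕ}
    (hx : ¬ (1 ≤ x.1 ∧ x.1 ≤ p ∧ 1 ≤ x.2 ∧ x.2 ≤ q)) : (mlt M).count x = 0 := by
  rw [Multiset.count_eq_zero]
  intro hc
  obtain ⟨a, b, _, rfl⟩ := mem_mlt hc
  exact hx ⟨by omega, by have := a.isLt; omega, by omega, by have := b.isLt; omega⟩

/-- The biword list of a pair. -/
def wlist (n : ℕ) (pr : (ℕ → ℕ) × (ℕ → ℕ)) : List (ℕ × ℕ) :=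
  (List.range n).map (fun j => (pr.1 (j + 1), pr.2 (j + 1)))

lemma wlist_length (n : ℕ) (pr : (ℕ → ℕ) × (ℕ → ℕ)) : (wlist n pr).length = n := by
  simp [wlist]

lemma wlist_get (n : ℕ) (pr : (ℕ → ℕ) × (ℕ → ℕ)) {j : ℕ} (hj : j < (wlist n pr).length) :
    (wlist n pr).get ⟨j, hj⟩ = (pr.1 (j + 1), pr.2 (j + 1)) := by
  simp [wlist]

lemma count_map_range {α : Type*} [DecidableEq α] (n : ℕ) (f : ℕ → α) (x : α) :
    Multiset.count x ↑((List.range n).map f)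
      = ((Finset.range n).filter (fun j => f j = x)).card := by
  induction n with
  | zero => simp
  | succ n ih =>
    rw [List.range_succ, List.map_append, ← Multiset.coe_add, Multiset.count_add,
      Finset.range_add_one, Finset.filter_insert]
    have hsing : Multiset.count x ↑(List.map f [n]) = if f n = x then 1 else 0 := by
      simp only [List.map_cons, List.map_nil]
      rw [show (↑([f n] : List α) : Multiset α) = {f n} from rfl]
      rw [Multiset.count_singleton]
      by_cases h : f n = x
      · rw [if_pos h, if_pos h.symm]
      · rw [if_neg h, if_neg (fun hc => h hc.symm)]
    rw [hsing, ih]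
    by_cases h : f n = x
    · rw [if_pos h, if_pos h, Finset.card_insert_of_notMem (by simp)]
    · rw [if_neg h, if_neg h]
      omega

lemma filter_range_card (n : ℕ) (P : ℕ → Prop) [DecidablePred P] :
    ((Finset.range n).filter (fun j => P (j + 1))).card = ((Finset.Icc 1 n).filter P).card := by
  apply Finset.card_bij' (fun j _ => j + 1) (fun i _ => i - 1)
  · intro a ha
    show a + 1 - 1 = a
    omega
  · intro a ha
    simp only [Finset.mem_filter, Finset.mem_Icc] at ha
    show a - 1 + 1 = a
    omega
  · intro a ha
    simp only [Finset.mem_filter, Finset.mem_range] at ha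
    simp only [Finset.mem_filter, Finset.mem_Icc]
    exact ⟨⟨by omega, by omega⟩, ha.2⟩
  · intro a ha
    simp only [Finset.mem_filter, Finset.mem_Icc] at ha
    simp only [Finset.mem_filter, Finset.mem_range]
    have he : a - 1 + 1 = a := by omega
    exact ⟨by omega, by rw [he]; exact ha.2⟩

lemma wlist_count (n : ℕ) (pr : (ℕ → ℕ) × (ℕ → ℕ)) (x : ℕ × ℕ) :
    Multiset.count x ↑(wlist n pr)
      = ((Finset.Icc 1 n).filter (fun i => (pr.1 i, pr.2 i) = x)).card := by
  rw [wlist, count_map_range]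
  exact filter_range_card n (fun i => (pr.1 i, pr.2 i) = x)


lemma wmax_eq {n : ℕ} {v : ℕ → ℕ} {k : ℕ}
    (himg : v '' Set.Icc 1 n = Set.Icc 1 k) : wmax n v = k := by
  rcases Nat.eq_zero_or_pos n with rfl | hn
  · have he : Set.Icc (1:ℕ) 0 = ∅ := Set.Icc_eq_empty (by omega)
    rw [he, Set.image_empty] at himg
    have hk : k = 0 := by
      by_contra hc
      have : (k : ℕ) ∈ Set.Icc 1 k := ⟨by omega, le_rfl⟩
      rw [← himg] at this
      exact this
    rw [hk]
    simp [wmax]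
  · have hk1 : 1 ≤ k := by
      by_contra hc
      have h1 : v 1 ∈ Set.Icc 1 k := by rw [← himg]; exact ⟨1, ⟨le_rfl, hn⟩, rfl⟩
      have h2 := h1.1
      have h3 := h1.2
      omega
    apply le_antisymm
    · apply Finset.sup_le
      intro i hi
      rw [Finset.mem_Icc] at hi
      have h1 : v i ∈ Set.Icc 1 k := by rw [← himg]; exact ⟨i, ⟨hi.1, hi.2⟩, rfl⟩
      exact h1.2
    · have h1 : (k : ℕ) ∈ Set.Icc 1 k := ⟨hk1, le_rfl⟩
      rw [← himg] at h1
      obtain ⟨i, hi, hvi⟩ := h1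
      calc k = v i := hvi.symm
        _ ≤ wmax n v := Finset.le_sup (Finset.mem_Icc.mpr ⟨hi.1, hi.2⟩)

lemma cayley_val_wmax {n : ℕ} {v : ℕ → ℕ} (hv : IsCayley n v) {i : ℕ}
    (h1 : 1 ≤ i) (h2 : i ≤ n) : 1 ≤ v i ∧ v i ≤ wmax n v := by
  obtain ⟨hw, k, himg⟩ := hv
  have hm : v i ∈ Set.Icc 1 k := by rw [← himg]; exact ⟨i, ⟨h1, h2⟩, rfl⟩
  exact ⟨hm.1, Finset.le_sup (Finset.mem_Icc.mpr ⟨h1, h2⟩)⟩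

/-- The encoding of a pair as a matrix. -/
def enc (n : ℕ) (pr : (ℕ → ℕ) × (ℕ → ℕ)) : Σ p : ℕ, Σ q : ℕ, Matrix (Fin p) (Fin q) ℕ :=
  ⟨wmax n pr.1, wmax n pr.2, fun a b =>
    ((Finset.Icc 1 n).filter (fun i => pr.1 i = (a : ℕ) + 1 ∧ pr.2 i = (b : ℕ) + 1)).card⟩

def pword (l : List (ℕ × ℕ)) : (ℕ → ℕ) × (ℕ → ℕ) :=
  (fun i => if h : 1 ≤ i ∧ i ≤ l.length then (l.get ⟨i - 1, by omega⟩).1 else 0,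
   fun i => if h : 1 ≤ i ∧ i ≤ l.length then (l.get ⟨i - 1, by omega⟩).2 else 0)

/-- The decoding of a matrix as a pair. -/
def dec {p q : ℕ} (M : Matrix (Fin p) (Fin q) ℕ) : (ℕ → ℕ) × (ℕ → ℕ) :=
  pword ((mlt M).sort rord)

lemma wlist_sorted {n : ℕ} {pr : (ℕ → ℕ) × (ℕ → ℕ)} (hmono : MonotoneOn pr.1 (Set.Icc 1 n))
    (hdes : desSet n pr.1 ⊆ desSet n pr.2) : (wlist n pr).Pairwise rord := by
  rw [← List.isChain_iff_pairwise, List.isChain_iff_getElem]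
  intro j hj
  have hj' : j + 1 < n := by
    have := wlist_length n pr
    omega
  have e1 := wlist_get n pr (j := j) (by omega)
  have e2 := wlist_get n pr (j := j + 1) hj
  simp only [List.get_eq_getElem] at e1 e2
  rw [e1, e2]
  have hle : pr.1 (j + 1) ≤ pr.1 (j + 1 + 1) :=
    hmono ⟨by omega, by omega⟩ ⟨by omega, by omega⟩ (by omega)
  rcases eq_or_lt_of_le hle with heq | hlt
  · right
    refine ⟨heq, ?_⟩
    have hd : j + 1 ∈ desSet n pr.1 := by
      simp only [desSet, Finset.mem_filter, Finset.mem_Icc]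
      exact ⟨⟨by omega, by omega⟩, by omega⟩
    have hd2 := hdes hd
    simp only [desSet, Finset.mem_filter, Finset.mem_Icc] at hd2
    exact hd2.2
  · left
    exact hlt

lemma mlt_enc {n : ℕ} {pr : (ℕ → ℕ) × (ℕ → ℕ)}
    (hcay1 : IsCayley n pr.1) (hcay2 : IsCayley n pr.2) :
    mlt (enc n pr).2.2 = ↑(wlist n pr) := by
  classical
  ext x
  rw [wlist_count]
  obtain ⟨x1, x2⟩ := x
  by_cases hx : 1 ≤ x1 ∧ x1 ≤ wmax n pr.1 ∧ 1 ≤ x2 ∧ x2 ≤ wmax n pr.2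
  · set a : Fin (wmax n pr.1) := ⟨x1 - 1, by omega⟩ with ha
    set b : Fin (wmax n pr.2) := ⟨x2 - 1, by omega⟩ with hb
    have hxa : x1 = (a : ℕ) + 1 := by rw [ha]; simp; omega
    have hxb : x2 = (b : ℕ) + 1 := by rw [hb]; simp; omega
    rw [hxa, hxb]
    refine (count_mlt_ab (enc n pr).2.2 a b).trans ?_
    show ((Finset.Icc 1 n).filter
      (fun i => pr.1 i = (a : ℕ) + 1 ∧ pr.2 i = (b : ℕ) + 1)).card = _
    congr 1
    apply Finset.filter_congr
    intro i _
    rw [Prod.mk.injEq]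
  · rw [count_mlt_zero _ (by simpa [enc] using hx)]
    symm
    rw [Finset.card_eq_zero, Finset.filter_eq_empty_iff]
    intro i hi
    rw [Finset.mem_Icc] at hi
    have h1 := cayley_val_wmax hcay1 hi.1 hi.2
    have h2 := cayley_val_wmax hcay2 hi.1 hi.2
    intro hc
    rw [Prod.mk.injEq] at hc
    apply hx
    refine ⟨?_, ?_, ?_, ?_⟩ <;> omega

lemma sort_mlt_enc {n : ℕ} {pr : (ℕ → ℕ) × (ℕ → ℕ)}
    (h1 : IsWI n pr.1) (h2 : IsCayley n pr.2) (h3 : desSet n pr.1 ⊆ desSet n pr.2) :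
    (mlt (enc n pr).2.2).sort rord = wlist n pr := by
  apply List.Perm.eq_of_pairwise' (Multiset.pairwise_sort _ rord) (wlist_sorted h1.2 h3) ?_
  rw [← Multiset.coe_eq_coe, Multiset.sort_eq, mlt_enc h1.1 h2]

lemma dec_enc {n : ℕ} {pr : (ℕ → ℕ) × (ℕ → ℕ)}
    (h1 : IsWI n pr.1) (h2 : IsCayley n pr.2) (h3 : desSet n pr.1 ⊆ desSet n pr.2) :
    dec (enc n pr).2.2 = pr := by
  unfold dec
  rw [sort_mlt_enc h1 h2 h3]
  have hlen := wlist_length n pr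
  apply Prod.ext
  · funext i
    show (pword (wlist n pr)).1 i = pr.1 i
    unfold pword
    by_cases hi : 1 ≤ i ∧ i ≤ n
    · have hc : 1 ≤ i ∧ i ≤ (wlist n pr).length := by rw [hlen]; exact hi
      simp only [dif_pos hc]
      rw [wlist_get n pr]
      show pr.1 (i - 1 + 1) = pr.1 i
      have he : i - 1 + 1 = i := by omega
      rw [he]
    · have hc : ¬ (1 ≤ i ∧ i ≤ (wlist n pr).length) := by rw [hlen]; exact hi
      simp only [dif_neg hc]
      exact (h1.1.1 i (by simpa [Set.mem_Icc] using hi)).symm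
  · funext i
    show (pword (wlist n pr)).2 i = pr.2 i
    unfold pword
    by_cases hi : 1 ≤ i ∧ i ≤ n
    · have hc : 1 ≤ i ∧ i ≤ (wlist n pr).length := by rw [hlen]; exact hi
      simp only [dif_pos hc]
      rw [wlist_get n pr]
      show pr.2 (i - 1 + 1) = pr.2 i
      have he : i - 1 + 1 = i := by omega
      rw [he]
    · have hc : ¬ (1 ≤ i ∧ i ≤ (wlist n pr).length) := by rw [hlen]; exact hi
      simp only [dif_neg hc]
      exact (h2.1 i (by simpa [Set.mem_Icc] using hi)).symm


section DecodeSide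

variable {n p q : ℕ} (M : Matrix (Fin p) (Fin q) ℕ)

lemma sort_length (hsize : matSize M = n) : ((mlt M).sort rord).length = n := by
  rw [Multiset.length_sort, card_mlt, hsize]

lemma dec_eval1' (hsize : matSize M = n) (j : ℕ) (hj : j < ((mlt M).sort rord).length) :
    (dec M).1 (j + 1) = (((mlt M).sort rord).get ⟨j, hj⟩).1 := by
  have hc : 1 ≤ j + 1 ∧ j + 1 ≤ ((mlt M).sort rord).length := ⟨by omega, by omega⟩
  show (pword ((mlt M).sort rord)).1 (j + 1) = _
  unfold pword
  simp only [dif_pos hc]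
  have he : ((mlt M).sort rord).get ⟨j + 1 - 1, by omega⟩ = ((mlt M).sort rord).get ⟨j, hj⟩ := by
    congr 1
  rw [he]

lemma dec_eval2' (hsize : matSize M = n) (j : ℕ) (hj : j < ((mlt M).sort rord).length) :
    (dec M).2 (j + 1) = (((mlt M).sort rord).get ⟨j, hj⟩).2 := by
  have hc : 1 ≤ j + 1 ∧ j + 1 ≤ ((mlt M).sort rord).length := ⟨by omega, by omega⟩
  show (pword ((mlt M).sort rord)).2 (j + 1) = _
  unfold pword
  simp only [dif_pos hc]
  have he : ((mlt M).sort rord).get ⟨j + 1 - 1, by omega⟩ = ((mlt M).sort rord).get ⟨j, hj⟩ := by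
    congr 1
  rw [he]

lemma dec_eval' (hsize : matSize M = n) (j : ℕ) (hj : j < ((mlt M).sort rord).length) :
    ((dec M).1 (j + 1), (dec M).2 (j + 1)) = ((mlt M).sort rord).get ⟨j, hj⟩ :=
  Prod.ext (dec_eval1' M hsize j hj) (dec_eval2' M hsize j hj)

lemma dec_eval (hsize : matSize M = n) {i : ℕ} (h1 : 1 ≤ i) (h2 : i ≤ n) :
    ((dec M).1 i, (dec M).2 i)
      = ((mlt M).sort rord).get ⟨i - 1, by rw [sort_length M hsize]; omega⟩ := by
  have h := dec_eval' M hsize (i - 1) (by rw [sort_length M hsize]; omega)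
  have he : i - 1 + 1 = i := by omega
  rw [he] at h
  exact h

lemma mem_sort_form {x : ℕ × ℕ} (hx : x ∈ (mlt M).sort rord) :
    ∃ a : Fin p, ∃ b : Fin q, M a b ≠ 0 ∧ x = ((a : ℕ) + 1, (b : ℕ) + 1) :=
  mem_mlt (by rwa [Multiset.mem_sort] at hx)

lemma dec_word1 (hsize : matSize M = n) : IsWord n (dec M).1 := by
  intro i hi
  simp only [Set.mem_Icc, not_and_or, not_le] at hi
  have hlen := sort_length M hsize
  have hc : ¬ (1 ≤ i ∧ i ≤ ((mlt M).sort rord).length) := by omega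
  show (pword ((mlt M).sort rord)).1 i = 0
  unfold pword
  simp only [dif_neg hc]

lemma dec_word2 (hsize : matSize M = n) : IsWord n (dec M).2 := by
  intro i hi
  simp only [Set.mem_Icc, not_and_or, not_le] at hi
  have hlen := sort_length M hsize
  have hc : ¬ (1 ≤ i ∧ i ≤ ((mlt M).sort rord).length) := by omega
  show (pword ((mlt M).sort rord)).2 i = 0
  unfold pword
  simp only [dif_neg hc]

lemma dec_rel (hsize : matSize M = n) {i j : ℕ} (h1 : 1 ≤ i) (hij : i < j) (h2 : j ≤ n) :
    rord ((dec M).1 i, (dec M).2 i) ((dec M).1 j, (dec M).2 j) := by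
  rw [dec_eval M hsize h1 (by omega), dec_eval M hsize (by omega : 1 ≤ j) h2]
  apply List.pairwise_iff_get.mp (Multiset.pairwise_sort _ rord)
  simp only [Fin.mk_lt_mk]
  omega

lemma dec_mono (hsize : matSize M = n) : MonotoneOn (dec M).1 (Set.Icc 1 n) := by
  rintro i ⟨hi1, hi2⟩ j ⟨hj1, hj2⟩ hij
  rcases eq_or_lt_of_le hij with rfl | hlt
  · exact le_rfl
  · have h := dec_rel M hsize hi1 hlt hj2
    unfold rord at h
    simp only at h
    omega

lemma dec_img1 (hB : IsBurge M) (hsize : matSize M = n) :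
    (dec M).1 '' Set.Icc 1 n = Set.Icc 1 p := by
  apply Set.eq_of_subset_of_subset
  · rintro m ⟨i, ⟨hi1, hi2⟩, rfl⟩
    have he := dec_eval M hsize hi1 hi2
    have hmem : ((mlt M).sort rord).get ⟨i - 1, by rw [sort_length M hsize]; omega⟩
        ∈ (mlt M).sort rord := List.get_mem _ _
    obtain ⟨a, b, hab, hx⟩ := mem_sort_form M hmem
    rw [← he] at hx
    have h1 := congrArg Prod.fst hx
    simp only at h1
    rw [h1]
    exact ⟨by omega, by have := a.isLt; omega⟩
  · rintro m ⟨hm1, hm2⟩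
    obtain ⟨b, hb⟩ := hB.1 ⟨m - 1, by omega⟩
    have hmem : (((⟨m - 1, by omega⟩ : Fin p) : ℕ) + 1, (b : ℕ) + 1) ∈ mlt M := by
      apply Multiset.mem_sum.mpr
      refine ⟨⟨m - 1, by omega⟩, Finset.mem_univ _, ?_⟩
      apply Multiset.mem_sum.mpr
      exact ⟨b, Finset.mem_univ _, Multiset.mem_replicate.mpr ⟨hb, rfl⟩⟩
    rw [← Multiset.mem_sort (r := rord)] at hmem
    obtain ⟨⟨j, hj⟩, hget⟩ := List.mem_iff_get.mp hmem
    have hjn : j < n := by rw [sort_length M hsize] at hj; exact hj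
    refine ⟨j + 1, ⟨by omega, by omega⟩, ?_⟩
    have he := dec_eval' M hsize j hj
    rw [hget] at he
    have h1 := congrArg Prod.fst he
    simp only at h1
    rw [h1]
    omega

lemma dec_img2 (hB : IsBurge M) (hsize : matSize M = n) :
    (dec M).2 '' Set.Icc 1 n = Set.Icc 1 q := by
  apply Set.eq_of_subset_of_subset
  · rintro m ⟨i, ⟨hi1, hi2⟩, rfl⟩
    have he := dec_eval M hsize hi1 hi2
    have hmem : ((mlt M).sort rord).get ⟨i - 1, by rw [sort_length M hsize]; omega⟩
        ∈ (mlt M).sort rord := List.get_mem _ _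
    obtain ⟨a, b, hab, hx⟩ := mem_sort_form M hmem
    rw [← he] at hx
    have h1 := congrArg Prod.snd hx
    simp only at h1
    rw [h1]
    exact ⟨by omega, by have := b.isLt; omega⟩
  · rintro m ⟨hm1, hm2⟩
    obtain ⟨a, ha⟩ := hB.2 ⟨m - 1, by omega⟩
    have hmem : ((a : ℕ) + 1, ((⟨m - 1, by omega⟩ : Fin q) : ℕ) + 1) ∈ mlt M := by
      apply Multiset.mem_sum.mpr
      refine ⟨a, Finset.mem_univ _, ?_⟩
      apply Multiset.mem_sum.mpr
      exact ⟨⟨m - 1, by omega⟩, Finset.mem_univ _, Multiset.mem_replicate.mpr ⟨ha, rfl⟩⟩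
    rw [← Multiset.mem_sort (r := rord)] at hmem
    obtain ⟨⟨j, hj⟩, hget⟩ := List.mem_iff_get.mp hmem
    have hjn : j < n := by rw [sort_length M hsize] at hj; exact hj
    refine ⟨j + 1, ⟨by omega, by omega⟩, ?_⟩
    have he := dec_eval' M hsize j hj
    rw [hget] at he
    have h1 := congrArg Prod.snd he
    simp only at h1
    rw [h1]
    omega

lemma dec_wi (hB : IsBurge M) (hsize : matSize M = n) : IsWI n (dec M).1 :=
  ⟨⟨dec_word1 M hsize, p, dec_img1 M hB hsize⟩, dec_mono M hsize⟩

lemma dec_cayley2 (hB : IsBurge M) (hsize : matSize M = n) : IsCayley n (dec M).2 :=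
  ⟨dec_word2 M hsize, q, dec_img2 M hB hsize⟩

lemma dec_des (hsize : matSize M = n) : desSet n (dec M).1 ⊆ desSet n (dec M).2 := by
  intro i hi
  simp only [desSet, Finset.mem_filter, Finset.mem_Icc] at hi ⊢
  obtain ⟨⟨hi1, hi2⟩, hle⟩ := hi
  have h := dec_rel M hsize hi1 (by omega : i < i + 1) (by omega)
  unfold rord at h
  simp only at h
  refine ⟨⟨hi1, hi2⟩, by omega⟩

lemma dec_in_burpairs (hB : IsBurge M) (hsize : matSize M = n) :
    IsWI n (dec M).1 ∧ IsCayley n (dec M).2 ∧ desSet n (dec M).1 ⊆ desSet n (dec M).2 :=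
  ⟨dec_wi M hB hsize, dec_cayley2 M hB hsize, dec_des M hsize⟩

lemma wlist_dec (hsize : matSize M = n) : wlist n (dec M) = (mlt M).sort rord := by
  apply List.ext_get
  · rw [wlist_length, sort_length M hsize]
  · intro j h1 h2
    rw [wlist_get n (dec M)]
    exact dec_eval' M hsize j h2

lemma dec_entry (hsize : matSize M = n) (a : Fin p) (b : Fin q) :
    ((Finset.Icc 1 n).filter
      (fun i => (dec M).1 i = (a : ℕ) + 1 ∧ (dec M).2 i = (b : ℕ) + 1)).card = M a b := by
  classical
  have h1 : ((Finset.Icc 1 n).filter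
      (fun i => (dec M).1 i = (a : ℕ) + 1 ∧ (dec M).2 i = (b : ℕ) + 1)).card
      = Multiset.count (((a : ℕ) + 1, (b : ℕ) + 1)) ↑(wlist n (dec M)) := by
    rw [wlist_count]
    congr 1
    apply Finset.filter_congr
    intro i _
    rw [Prod.mk.injEq]
  rw [h1, wlist_dec M hsize, Multiset.sort_eq, count_mlt_ab]

lemma sigma_eq_of {p q p' q' : ℕ} (M : Matrix (Fin p) (Fin q) ℕ)
    (M' : Matrix (Fin p') (Fin q') ℕ) (hp : p = p') (hq : q = q')
    (h : ∀ (a : Fin p') (b : Fin q'),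
      M ⟨a.1, by omega⟩ ⟨b.1, by omega⟩ = M' a b) :
    (⟨p, q, M⟩ : Σ p : ℕ, Σ q : ℕ, Matrix (Fin p) (Fin q) ℕ) = ⟨p', q', M'⟩ := by
  subst hp
  subst hq
  have hM : M = M' := by
    funext a b
    exact h a b
  rw [hM]

lemma enc_dec (hB : IsBurge M) (hsize : matSize M = n) :
    enc n (dec M) = ⟨p, q, M⟩ := by
  have hp : wmax n (dec M).1 = p := wmax_eq (dec_img1 M hB hsize)
  have hq : wmax n (dec M).2 = q := wmax_eq (dec_img2 M hB hsize)
  apply sigma_eq_of _ _ hp hq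
  intro a b
  show ((Finset.Icc 1 n).filter _).card = M a b
  have h := dec_entry M hsize a b
  rw [← h]

end DecodeSide


lemma card_filter_partition {n : ℕ} (p : ℕ) (u : ℕ → ℕ)
    (hu : ∀ i, 1 ≤ i → i ≤ n → 1 ≤ u i ∧ u i ≤ p) (P : ℕ → Prop) [DecidablePred P] :
    ((Finset.Icc 1 n).filter P).card
      = ∑ a : Fin p, ((Finset.Icc 1 n).filter (fun i => u i = (a : ℕ) + 1 ∧ P i)).card := by
  classical
  rw [Finset.card_eq_sum_card_fiberwise (f := fun i => u i) (t := Finset.Icc 1 p) ?hmem]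
  case hmem =>
    intro x hx
    simp only [Finset.mem_coe, Finset.mem_filter, Finset.mem_Icc] at hx
    rw [Finset.mem_coe, Finset.mem_Icc]
    exact hu x hx.1.1 hx.1.2
  have himg : Finset.Icc 1 p = (Finset.range p).image (· + 1) := by
    ext j
    simp only [Finset.mem_Icc, Finset.mem_image, Finset.mem_range]
    constructor
    · rintro ⟨h1, h2⟩; exact ⟨j - 1, by omega, by omega⟩
    · rintro ⟨a, h1, rfl⟩; omega
  rw [himg, Finset.sum_image (by intro a _ b _ h; simp only at h; omega)]
  rw [Fin.sum_univ_eq_sum_range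
    (fun m => ((Finset.Icc 1 n).filter (fun i => u i = m + 1 ∧ P i)).card) p]
  apply Finset.sum_congr rfl
  intro m _
  rw [Finset.filter_filter]
  congr 1
  apply Finset.filter_congr
  intro i _
  constructor
  · rintro ⟨ha, hb⟩; exact ⟨hb, ha⟩
  · rintro ⟨ha, hb⟩; exact ⟨hb, ha⟩

lemma enc_burge {n : ℕ} {pr : (ℕ → ℕ) × (ℕ → ℕ)}
    (h1 : IsCayley n pr.1) (h2 : IsCayley n pr.2) : IsBurge (enc n pr).2.2 := by
  have hfst : (enc n pr).1 = wmax n pr.1 := rfl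
  have hsnd : (enc n pr).2.1 = wmax n pr.2 := rfl
  constructor
  · intro a
    have hia : (a : ℕ) < wmax n pr.1 := a.isLt
    obtain ⟨hw, k, himg⟩ := h1
    have hk : wmax n pr.1 = k := wmax_eq himg
    have hmem : ((a : ℕ) + 1) ∈ Set.Icc 1 k := ⟨by omega, by omega⟩
    rw [← himg] at hmem
    obtain ⟨i, ⟨hi1, hi2⟩, hvi⟩ := hmem
    have hv2 := cayley_val_wmax h2 hi1 hi2
    refine ⟨⟨pr.2 i - 1, by show pr.2 i - 1 < wmax n pr.2; omega⟩, ?_⟩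
    show ((Finset.Icc 1 n).filter _).card ≠ 0
    apply Finset.card_ne_zero_of_mem (a := i)
    rw [Finset.mem_filter, Finset.mem_Icc]
    refine ⟨⟨hi1, hi2⟩, hvi, ?_⟩
    show pr.2 i = pr.2 i - 1 + 1
    omega
  · intro b
    have hib : (b : ℕ) < wmax n pr.2 := b.isLt
    obtain ⟨hw, k, himg⟩ := h2
    have hk : wmax n pr.2 = k := wmax_eq himg
    have hmem : ((b : ℕ) + 1) ∈ Set.Icc 1 k := ⟨by omega, by omega⟩
    rw [← himg] at hmem
    obtain ⟨i, ⟨hi1, hi2⟩, hvi⟩ := hmem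
    have hv1 := cayley_val_wmax h1 hi1 hi2
    refine ⟨⟨pr.1 i - 1, by show pr.1 i - 1 < wmax n pr.1; omega⟩, ?_⟩
    show ((Finset.Icc 1 n).filter _).card ≠ 0
    apply Finset.card_ne_zero_of_mem (a := i)
    rw [Finset.mem_filter, Finset.mem_Icc]
    refine ⟨⟨hi1, hi2⟩, ?_, hvi⟩
    show pr.1 i = pr.1 i - 1 + 1
    omega

lemma enc_size {n : ℕ} {pr : (ℕ → ℕ) × (ℕ → ℕ)}
    (h1 : IsCayley n pr.1) (h2 : IsCayley n pr.2) : matSize (enc n pr).2.2 = n := by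
  classical
  show ∑ a : Fin (wmax n pr.1), ∑ b : Fin (wmax n pr.2),
    ((Finset.Icc 1 n).filter (fun i => pr.1 i = (a : ℕ) + 1 ∧ pr.2 i = (b : ℕ) + 1)).card = n
  have hstep1 : ∀ a : Fin (wmax n pr.1),
      ∑ b : Fin (wmax n pr.2),
        ((Finset.Icc 1 n).filter (fun i => pr.1 i = (a : ℕ) + 1 ∧ pr.2 i = (b : ℕ) + 1)).card
      = ((Finset.Icc 1 n).filter (fun i => pr.1 i = (a : ℕ) + 1)).card := by
    intro a
    rw [card_filter_partition (wmax n pr.2) pr.2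
      (fun i hi1 hi2 => cayley_val_wmax h2 hi1 hi2) (fun i => pr.1 i = (a : ℕ) + 1)]
    apply Finset.sum_congr rfl
    intro b _
    congr 1
    apply Finset.filter_congr
    intro i _
    constructor
    · rintro ⟨ha, hb⟩; exact ⟨hb, ha⟩
    · rintro ⟨ha, hb⟩; exact ⟨hb, ha⟩
  rw [Finset.sum_congr rfl (fun a _ => hstep1 a)]
  have hstep2 := card_filter_partition (wmax n pr.1) pr.1
    (fun i hi1 hi2 => cayley_val_wmax h1 hi1 hi2) (fun _ => True)
  simp only [and_true, Finset.filter_true] at hstep2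
  rw [← hstep2, Nat.card_Icc]
  omega

lemma chain_strict (v : ℕ → ℕ) (i i' : ℕ) (hii' : i < i')
    (h : ∀ j, i ≤ j → j < i' → v (j + 1) < v j) : v i' < v i := by
  have hle : i + 1 ≤ i' := hii'
  induction i', hle using Nat.le_induction with
  | base => exact h i le_rfl (by omega)
  | succ i' hi ih =>
    have h1 : v (i' + 1) < v i' := h i' (by omega) (by omega)
    have h2 : v i' < v i := ih (by omega) (fun j hj1 hj2 => h j hj1 (by omega))
    omega

lemma plateau_des {n : ℕ} {pr : (ℕ → ℕ) × (ℕ → ℕ)} (hwi : IsWI n pr.1)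
    (hd : desSet n pr.1 ⊆ sdesSet n pr.2) {i i' : ℕ} (h1 : 1 ≤ i) (hii' : i < i')
    (h2 : i' ≤ n) (hu : pr.1 i = pr.1 i') : pr.2 i' < pr.2 i := by
  apply chain_strict pr.2 i i' hii'
  intro j hj1 hj2
  have ha : pr.1 i ≤ pr.1 j := hwi.2 ⟨h1, by omega⟩ ⟨by omega, by omega⟩ hj1
  have hb : pr.1 j ≤ pr.1 (j + 1) := hwi.2 ⟨by omega, by omega⟩ ⟨by omega, by omega⟩ (by omega)
  have hc : pr.1 (j + 1) ≤ pr.1 i' := hwi.2 ⟨by omega, by omega⟩ ⟨by omega, h2⟩ (by omega)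
  have hdj : j ∈ desSet n pr.1 := by
    simp only [desSet, Finset.mem_filter, Finset.mem_Icc]
    exact ⟨⟨by omega, by omega⟩, by omega⟩
  have hsd := hd hdj
  simp only [sdesSet, Finset.mem_filter] at hsd
  exact hsd.2

lemma enc_binary {n : ℕ} {pr : (ℕ → ℕ) × (ℕ → ℕ)} (hwi : IsWI n pr.1)
    (hd : desSet n pr.1 ⊆ sdesSet n pr.2) (a : Fin (wmax n pr.1)) (b : Fin (wmax n pr.2)) :
    (enc n pr).2.2 a b ≤ 1 := by
  show ((Finset.Icc 1 n).filter _).card ≤ 1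
  by_contra hcon
  push_neg at hcon
  rw [Finset.one_lt_card] at hcon
  obtain ⟨i, hi, i', hi', hne⟩ := hcon
  simp only [Finset.mem_filter, Finset.mem_Icc] at hi hi'
  rcases Nat.lt_or_ge i i' with hlt | hge
  · have := plateau_des hwi hd hi.1.1 hlt hi'.1.2 (by omega)
    omega
  · have hlt : i' < i := by omega
    have := plateau_des hwi hd hi'.1.1 hlt hi.1.2 (by omega)
    omega

lemma sdes_subset_des (n : ℕ) (v : ℕ → ℕ) : sdesSet n v ⊆ desSet n v := by
  intro i hi
  simp only [sdesSet, desSet, Finset.mem_filter] at hi ⊢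
  exact ⟨hi.1, by omega⟩


lemma dec_val_bound1 {n p q : ℕ} (M : Matrix (Fin p) (Fin q) ℕ) (hB : IsBurge M)
    (hsize : matSize M = n) : ∀ i, 1 ≤ i → i ≤ n → 1 ≤ (dec M).1 i ∧ (dec M).1 i ≤ p := by
  intro i hi1 hi2
  have h : (dec M).1 i ∈ Set.Icc 1 p := by
    rw [← dec_img1 M hB hsize]
    exact ⟨i, ⟨hi1, hi2⟩, rfl⟩
  exact ⟨h.1, h.2⟩

lemma dec_sdes {n p q : ℕ} (M : Matrix (Fin p) (Fin q) ℕ) (hbin : ∀ a b, M a b ≤ 1)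
    (hsize : matSize M = n) : desSet n (dec M).1 ⊆ sdesSet n (dec M).2 := by
  intro i hi
  simp only [desSet, Finset.mem_filter, Finset.mem_Icc] at hi
  obtain ⟨⟨hi1, hi2⟩, hle⟩ := hi
  have hrel := dec_rel M hsize hi1 (by omega : i < i + 1) (by omega)
  unfold rord at hrel
  simp only at hrel
  have hueq : (dec M).1 i = (dec M).1 (i + 1) := by omega
  have hvle : (dec M).2 (i + 1) ≤ (dec M).2 i := by omega
  simp only [sdesSet, Finset.mem_filter, Finset.mem_Icc]
  refine ⟨⟨hi1, hi2⟩, ?_⟩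
  rcases lt_or_eq_of_le hvle with h | h
  · exact h
  · exfalso
    have hidx1 : i - 1 < ((mlt M).sort rord).length := by rw [sort_length M hsize]; omega
    have hidx2 : i < ((mlt M).sort rord).length := by rw [sort_length M hsize]; omega
    have e1 := dec_eval M hsize hi1 (by omega : i ≤ n)
    have e2 := dec_eval' M hsize i hidx2
    set l := (mlt M).sort rord with hl
    set x := l.get ⟨i - 1, hidx1⟩ with hxdef
    have hgg : l.get ⟨i, hidx2⟩ = x := by
      rw [← e1, ← e2]
      exact (Prod.ext hueq h.symm).symm
    have hdrop : l.drop (i - 1) = x :: l.drop i := by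
      have hd := List.drop_eq_getElem_cons hidx1
      rwa [show i - 1 + 1 = i by omega] at hd
    have hdrop2 : l.drop i = x :: l.drop (i + 1) := by
      have hd := List.drop_eq_getElem_cons hidx2
      rw [hd]; exact congrArg (fun y => y :: l.drop (i + 1)) hgg
    have hsub : List.Sublist [x, x] l := by
      have h1 : List.Sublist [x, x] (l.drop (i - 1)) := by
        rw [hdrop, hdrop2]
        apply List.Sublist.cons₂
        apply List.Sublist.cons₂
        exact List.nil_sublist _
      exact h1.trans (List.drop_sublist _ _)
    have hle2 : 2 ≤ Multiset.count x (mlt M) := by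
      rw [← Multiset.sort_eq (mlt M) rord]
      rw [Multiset.le_count_iff_replicate_le]
      have hrep : Multiset.replicate 2 x = (↑[x, x] : Multiset (ℕ × ℕ)) := rfl
      rw [hrep, ← hl]
      exact Multiset.coe_le.mpr hsub.subperm
    have hxl : x ∈ l := List.get_mem _ _
    obtain ⟨a, b, hab, hxeq⟩ := mem_sort_form M hxl
    rw [hxeq, count_mlt_ab] at hle2
    have := hbin a b
    omega

lemma dec_perm {n p q : ℕ} (M : Matrix (Fin p) (Fin q) ℕ) (hB : IsBurge M)
    (hsize : matSize M = n) (hcol : ∀ b : Fin q, ∑ a, M a b = 1) :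
    IsPermWord n (dec M).2 := by
  classical
  have hq : q = n := by
    have h1 : matSize M = ∑ b : Fin q, ∑ a : Fin p, M a b := Finset.sum_comm
    rw [hsize] at h1
    have h2 : ∑ b : Fin q, ∑ a : Fin p, M a b = ∑ _b : Fin q, 1 :=
      Finset.sum_congr rfl (fun b _ => hcol b)
    simp only [Finset.sum_const, Finset.card_univ, Fintype.card_fin, smul_eq_mul,
      mul_one] at h2
    omega
  have himg : (dec M).2 '' Set.Icc 1 n = Set.Icc 1 n := by
    rw [dec_img2 M hB hsize, hq]
  have hfib : ∀ b : Fin q,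
      ((Finset.Icc 1 n).filter (fun t => (dec M).2 t = (b : ℕ) + 1)).card = 1 := by
    intro b
    rw [card_filter_partition p (dec M).1 (dec_val_bound1 M hB hsize)
      (fun t => (dec M).2 t = (b : ℕ) + 1)]
    rw [Finset.sum_congr rfl (fun a _ => dec_entry M hsize a b)]
    exact hcol b
  refine ⟨dec_word2 M hsize, ?_, ?_, ?_⟩
  · intro i hi
    rw [← himg]
    exact ⟨i, hi, rfl⟩
  · intro i hi j hj hvij
    rw [Set.mem_Icc] at hi hj
    have hvi : (dec M).2 i ∈ Set.Icc 1 n := by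
      rw [← himg]; exact ⟨i, by rw [Set.mem_Icc]; exact hi, rfl⟩
    rw [Set.mem_Icc] at hvi
    have hble : (dec M).2 i - 1 < q := by omega
    set b : Fin q := ⟨(dec M).2 i - 1, hble⟩ with hbdef
    have hb1 : (dec M).2 i = (b : ℕ) + 1 := by rw [hbdef]; simp; omega
    have hcard := hfib b
    rw [Finset.card_eq_one] at hcard
    obtain ⟨x, hx⟩ := hcard
    have hix : i ∈ (Finset.Icc 1 n).filter (fun t => (dec M).2 t = (b : ℕ) + 1) := by
      rw [Finset.mem_filter, Finset.mem_Icc]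
      exact ⟨hi, hb1⟩
    have hjx : j ∈ (Finset.Icc 1 n).filter (fun t => (dec M).2 t = (b : ℕ) + 1) := by
      rw [Finset.mem_filter, Finset.mem_Icc]
      exact ⟨hj, by rw [← hvij]; exact hb1⟩
    rw [hx, Finset.mem_singleton] at hix hjx
    rw [hix, hjx]
  · intro m hm
    rw [← himg] at hm
    exact hm


lemma enc_colsum {n : ℕ} {pr : (ℕ → ℕ) × (ℕ → ℕ)} (h1 : IsCayley n pr.1)
    (hperm : IsPermWord n pr.2) (b : Fin (wmax n pr.2)) :
    ∑ a : Fin (wmax n pr.1), (enc n pr).2.2 a b = 1 := by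
  classical
  have hq : wmax n pr.2 = n := wmax_eq hperm.2.image_eq
  show ∑ a : Fin (wmax n pr.1),
    ((Finset.Icc 1 n).filter (fun i => pr.1 i = (a : ℕ) + 1 ∧ pr.2 i = (b : ℕ) + 1)).card = 1
  rw [← card_filter_partition (wmax n pr.1) pr.1
    (fun i hi1 hi2 => cayley_val_wmax h1 hi1 hi2) (fun i => pr.2 i = (b : ℕ) + 1)]
  rw [Finset.card_eq_one]
  have hb : ((b : ℕ) + 1) ∈ Set.Icc 1 n := ⟨by omega, by have := b.isLt; omega⟩
  obtain ⟨i₀, hi₀, hv⟩ := hperm.2.2.2 hb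
  rw [Set.mem_Icc] at hi₀
  refine ⟨i₀, ?_⟩
  ext i
  simp only [Finset.mem_filter, Finset.mem_Icc, Finset.mem_singleton]
  constructor
  · rintro ⟨hiI, hvi⟩
    exact hperm.2.2.1 (Set.mem_Icc.mpr hiI) (Set.mem_Icc.mpr hi₀) (by rw [hvi, hv])
  · rintro rfl
    exact ⟨hi₀, hv⟩

lemma permWord_isPermWord {n : ℕ} (σ : Equiv.Perm (Fin n)) : IsPermWord n (permWord n σ) := by
  refine ⟨?_, ?_, ?_, ?_⟩
  · intro i hi
    rw [Set.mem_Icc] at hi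
    unfold permWord
    rw [dif_neg hi]
  · intro i hi
    rw [Set.mem_Icc] at hi
    unfold permWord
    rw [dif_pos hi]
    have := (σ ⟨i - 1, by omega⟩).isLt
    exact Set.mem_Icc.mpr ⟨by omega, by omega⟩
  · intro i hi j hj h
    rw [Set.mem_Icc] at hi hj
    unfold permWord at h
    rw [dif_pos hi, dif_pos hj] at h
    have h2 : σ ⟨i - 1, by omega⟩ = σ ⟨j - 1, by omega⟩ := Fin.ext (by omega)
    have h3 := σ.injective h2
    have h4 : i - 1 = j - 1 := congrArg Fin.val h3
    omega
  · intro m hm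
    rw [Set.mem_Icc] at hm
    set a := σ.symm ⟨m - 1, by omega⟩ with ha
    refine ⟨(a : ℕ) + 1, Set.mem_Icc.mpr ⟨by omega, by have := a.isLt; omega⟩, ?_⟩
    unfold permWord
    rw [dif_pos ⟨by omega, by have := a.isLt; omega⟩]
    simp only [Nat.add_sub_cancel, Fin.eta]
    rw [ha, Equiv.apply_symm_apply]
    show m - 1 + 1 = m
    omega

lemma permWord_inj (n : ℕ) : Function.Injective (permWord n) := by
  intro σ τ h
  apply Equiv.ext
  intro j
  have hj := j.isLt
  have h2 := congrFun h ((j : ℕ) + 1)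
  have e1 : permWord n σ ((j : ℕ) + 1) = (σ j : ℕ) + 1 := by
    unfold permWord
    rw [dif_pos ⟨by omega, by omega⟩]
    simp only [Nat.add_sub_cancel, Fin.eta]
  have e2 : permWord n τ ((j : ℕ) + 1) = (τ j : ℕ) + 1 := by
    unfold permWord
    rw [dif_pos ⟨by omega, by omega⟩]
    simp only [Nat.add_sub_cancel, Fin.eta]
  rw [e1, e2] at h2
  exact Fin.ext (by omega)

lemma permWord_range (n : ℕ) : Set.range (permWord n) = {v : ℕ → ℕ | IsPermWord n v} := by
  apply subset_antisymm
  · rintro v ⟨σ, rfl⟩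
    exact permWord_isPermWord σ
  · intro v hv
    obtain ⟨hw, hbij⟩ := hv
    have hval : ∀ j : Fin n, v ((j : ℕ) + 1) - 1 < n ∧ 1 ≤ v ((j : ℕ) + 1) := by
      intro j
      have hj := j.isLt
      have h1 := hbij.1 (Set.mem_Icc.mpr ⟨by omega, by omega⟩ :
        ((j : ℕ) + 1) ∈ Set.Icc 1 n)
      rw [Set.mem_Icc] at h1
      exact ⟨by omega, h1.1⟩
    set f : Fin n → Fin n := fun j => ⟨v ((j : ℕ) + 1) - 1, (hval j).1⟩ with hf
    have hinj : Function.Injective f := by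
      intro a b h
      have ha := a.isLt
      have hb := b.isLt
      have h1 : v ((a : ℕ) + 1) - 1 = v ((b : ℕ) + 1) - 1 := congrArg Fin.val h
      have h2 : v ((a : ℕ) + 1) = v ((b : ℕ) + 1) := by
        have := (hval a).2
        have := (hval b).2
        omega
      have h3 := hbij.2.1 (Set.mem_Icc.mpr ⟨by omega, by omega⟩)
        (Set.mem_Icc.mpr ⟨by omega, by omega⟩) h2
      exact Fin.ext (by omega)
    have hbijf : Function.Bijective f := Finite.injective_iff_bijective.mp hinj
    refine ⟨Equiv.ofBijective f hbijf, ?_⟩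
    funext i
    by_cases hi : 1 ≤ i ∧ i ≤ n
    · unfold permWord
      rw [dif_pos hi]
      have happ : (Equiv.ofBijective f hbijf) ⟨i - 1, by omega⟩ = f ⟨i - 1, by omega⟩ := rfl
      rw [happ, hf]
      show v (i - 1 + 1) - 1 + 1 = v i
      have he : i - 1 + 1 = i := by omega
      rw [he]
      have h1 := hbij.1 (Set.mem_Icc.mpr ⟨hi.1, hi.2⟩ : i ∈ Set.Icc 1 n)
      rw [Set.mem_Icc] at h1
      omega
    · unfold permWord
      rw [dif_neg hi]
      exact (hw i (by rw [Set.mem_Icc]; exact hi)).symm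

lemma perm_sum (n : ℕ) (g : (ℕ → ℕ) → ℕ) :
    ∑ σ : Equiv.Perm (Fin n), g (permWord n σ)
      = ∑ᶠ v ∈ {v : ℕ → ℕ | IsPermWord n v}, g v := by
  rw [← permWord_range, finsum_mem_range (permWord_inj n)]
  exact (finsum_eq_sum_of_fintype _).symm


lemma sdesSet_subset (n : ℕ) (v : ℕ → ℕ) : sdesSet n v ⊆ Finset.Icc 1 (n - 1) :=
  Finset.filter_subset _ _

lemma EQ1 (n : ℕ) :
    (∑ᶠ v ∈ {v : ℕ → ℕ | IsCayley n v}, 2 ^ des n v) = Set.ncard (BurPairs n) :=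
  (FIB {v : ℕ → ℕ | IsCayley n v} cayley_finite (desSet n)
    (fun v _ => desSet_subset n v)).symm

lemma EQ3 (n : ℕ) :
    (∑ᶠ v ∈ {v : ℕ → ℕ | IsCayley n v}, 2 ^ sdes n v) = Set.ncard (BBurPairs n) :=
  (FIB {v : ℕ → ℕ | IsCayley n v} cayley_finite (sdesSet n)
    (fun v _ => sdesSet_subset n v)).symm

lemma EQ5 (n : ℕ) :
    (∑ σ : Equiv.Perm (Fin n), 2 ^ des n (permWord n σ)) = Set.ncard (PBurPairs n) := by
  rw [perm_sum n (fun v => 2 ^ des n v)]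
  exact (FIB {v : ℕ → ℕ | IsPermWord n v} permword_finite (desSet n)
    (fun v _ => desSet_subset n v)).symm

lemma enc_injOn (n : ℕ) : Set.InjOn (enc n) (BurPairs n) := by
  intro pr hpr pr' hpr' he
  have h1 : dec (enc n pr).2.2 = pr := dec_enc hpr.1 hpr.2.1 hpr.2.2
  have h2 : dec (enc n pr').2.2 = pr' := dec_enc hpr'.1 hpr'.2.1 hpr'.2.2
  rw [← h1, ← h2, he]

lemma EQ2 (n : ℕ) : Set.ncard (BurPairs n) = Set.ncard (BurgeMatrices n) := by
  have himg : enc n '' BurPairs n = BurgeMatrices n := by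
    apply subset_antisymm
    · rintro _ ⟨pr, hpr, rfl⟩
      exact ⟨enc_burge hpr.1.1 hpr.2.1, enc_size hpr.1.1 hpr.2.1⟩
    · rintro ⟨p, q, M⟩ hM
      exact ⟨dec M, dec_in_burpairs M hM.1 hM.2, enc_dec M hM.1 hM.2⟩
  rw [← himg, Set.ncard_image_of_injOn (enc_injOn n)]

lemma EQ4 (n : ℕ) : Set.ncard (BBurPairs n) = Set.ncard (BinaryBurgeMatrices n) := by
  have hsub : BBurPairs n ⊆ BurPairs n := fun pr h =>
    ⟨h.1, h.2.1, Finset.Subset.trans h.2.2 (sdes_subset_des n pr.2)⟩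
  have himg : enc n '' BBurPairs n = BinaryBurgeMatrices n := by
    apply subset_antisymm
    · rintro _ ⟨pr, hpr, rfl⟩
      exact ⟨⟨enc_burge hpr.1.1 hpr.2.1, enc_size hpr.1.1 hpr.2.1⟩,
        fun a b => enc_binary hpr.1 hpr.2.2 a b⟩
    · rintro ⟨p, q, M⟩ hM
      exact ⟨dec M, ⟨dec_wi M hM.1.1 hM.1.2, dec_cayley2 M hM.1.1 hM.1.2,
        dec_sdes M hM.2 hM.1.2⟩, enc_dec M hM.1.1 hM.1.2⟩
  rw [← himg, Set.ncard_image_of_injOn ((enc_injOn n).mono hsub)]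

lemma EQ6 (n : ℕ) : Set.ncard (PBurPairs n) = Set.ncard (ColSumOneBurgeMatrices n) := by
  have hsub : PBurPairs n ⊆ BurPairs n := fun pr h =>
    ⟨h.1, permword_isCayley h.2.1, h.2.2⟩
  have himg : enc n '' PBurPairs n = ColSumOneBurgeMatrices n := by
    apply subset_antisymm
    · rintro _ ⟨pr, hpr, rfl⟩
      exact ⟨⟨enc_burge hpr.1.1 (permword_isCayley hpr.2.1),
        enc_size hpr.1.1 (permword_isCayley hpr.2.1)⟩,
        fun b => enc_colsum hpr.1.1 hpr.2.1 b⟩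
    · rintro ⟨p, q, M⟩ hM
      exact ⟨dec M, ⟨dec_wi M hM.1.1 hM.1.2, dec_perm M hM.1.1 hM.1.2 hM.2,
        dec_des M hM.1.2⟩, enc_dec M hM.1.1 hM.1.2⟩
  rw [← himg, Set.ncard_image_of_injOn ((enc_injOn n).mono hsub)]

/-- Theorem 5.1: `C_n(2) = |Bur[n]| = |Mat[n]|`,
`C∘_n(2) = |BBur[n]| = |BMat[n]|` and `A_n(2) = |PBur[n]| = |PMat[n]|`. -/
theorem stmt6 (n : ℕ) :
    ((∑ᶠ v ∈ {v : ℕ → ℕ | IsCayley n v}, 2 ^ des n v)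
        = Set.ncard (BurPairs n) ∧
      Set.ncard (BurPairs n) = Set.ncard (BurgeMatrices n)) ∧
    ((∑ᶠ v ∈ {v : ℕ → ℕ | IsCayley n v}, 2 ^ sdes n v)
        = Set.ncard (BBurPairs n) ∧
      Set.ncard (BBurPairs n) = Set.ncard (BinaryBurgeMatrices n)) ∧
    ((∑ σ : Equiv.Perm (Fin n), 2 ^ des n (permWord n σ))
        = Set.ncard (PBurPairs n) ∧
      Set.ncard (PBurPairs n) = Set.ncard (ColSumOneBurgeMatrices n)) :=
  ⟨⟨EQ1 n, EQ2 n⟩, ⟨EQ3 n, EQ4 n⟩, ⟨EQ5 n, EQ6 n⟩⟩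

end CayPaper
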